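/- arXiv:1411.5007 — 5 statements merged into one kernel-verified Lean document; each statement's English description precedes it below -/
import Mathlib

section
/- If two players repeatedly play a zero-sum matrix game with payoff matrix A for T rounds, with the row player choosing x^t and column player y^t, and each player's external regret (relative to the best fixed strategy in hindsight, with row player receiving utility vectors A y^t and column player receiving -A^T x^t) is at most ε·T, then the pair of average strategies (x̄, ȳ) = ((1/T)∑ x^t, (1/T)∑ y^t) is a 2ε-Nash equilibrium: for all x' in the row player's strategy simplex, x'·A ȳ ≤ x̄·A ȳ + 2ε, and for all y' in the column player's simplex, x̄·A ȳ ≤ x̄·A y' + 2ε. -/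
open Matrix Finset

lemma dot_sum_right {m T : ℕ} (v : Fin m → ℝ) (f : Fin T → Fin m → ℝ) :
    v ⬝ᵥ ∑ t, f t = ∑ t, v ⬝ᵥ f t := by
  simp [dotProduct, Finset.mul_sum]; exact Finset.sum_comm

lemma dot_sum_left {m T : ℕ} (v : Fin m → ℝ) (f : Fin T → Fin m → ℝ) :
    (∑ t, f t) ⬝ᵥ v = ∑ t, f t ⬝ᵥ v := by
  simp [dotProduct, Finset.sum_mul]; exact Finset.sum_comm

/-- Two no-regret learners in self-play: if each player's external regret is at
most `ε·T`, the average strategies form a `2ε`-Nash equilibrium. -/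
theorem stmt_0 {m n T : ℕ} (hT : 0 < T) (A : Matrix (Fin m) (Fin n) ℝ)
    (x : Fin T → Fin m → ℝ) (y : Fin T → Fin n → ℝ) (ε : ℝ)
    (hx : ∀ t, x t ∈ stdSimplex ℝ (Fin m))
    (hy : ∀ t, y t ∈ stdSimplex ℝ (Fin n))
    (hRegRow : ∀ x' ∈ stdSimplex ℝ (Fin m),
      ∑ t, (x' ⬝ᵥ A.mulVec (y t) - x t ⬝ᵥ A.mulVec (y t)) ≤ ε * T)
    (hRegCol : ∀ y' ∈ stdSimplex ℝ (Fin n),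
      ∑ t, (x t ⬝ᵥ A.mulVec (y t) - x t ⬝ᵥ A.mulVec y') ≤ ε * T)
    (xbar : Fin m → ℝ) (ybar : Fin n → ℝ)
    (hxbar : xbar = (1 / (T : ℝ)) • ∑ t, x t)
    (hybar : ybar = (1 / (T : ℝ)) • ∑ t, y t) :
    (∀ x' ∈ stdSimplex ℝ (Fin m),
      x' ⬝ᵥ A.mulVec ybar ≤ xbar ⬝ᵥ A.mulVec ybar + 2 * ε) ∧
    (∀ y' ∈ stdSimplex ℝ (Fin n),
      xbar ⬝ᵥ A.mulVec ybar ≤ xbar ⬝ᵥ A.mulVec y' + 2 * ε) := by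
  have hTr : (0:ℝ) < T := by exact_mod_cast hT
  set V : ℝ := (1 / (T:ℝ)) * ∑ t, x t ⬝ᵥ A.mulVec (y t) with hV
  -- linearity in y
  have hyb : ∀ v : Fin m → ℝ, v ⬝ᵥ A.mulVec ybar
      = (1 / (T:ℝ)) * ∑ t, v ⬝ᵥ A.mulVec (y t) := by
    intro v
    rw [hybar, Matrix.mulVec_smul, dotProduct_smul, smul_eq_mul]
    congr 1
    rw [show A.mulVec (∑ t, y t) = ∑ t, A.mulVec (y t) by
      simp only [← Matrix.mulVecLin_apply, map_sum]]
    exact dot_sum_right v _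
  -- linearity in x
  have hxb : ∀ w : Fin m → ℝ, xbar ⬝ᵥ w
      = (1 / (T:ℝ)) * ∑ t, x t ⬝ᵥ w := by
    intro w
    rw [hxbar, smul_dotProduct, smul_eq_mul, dot_sum_left]
  -- xbar, ybar in simplex
  have hxbarS : xbar ∈ stdSimplex ℝ (Fin m) := by
    constructor
    · intro i
      rw [hxbar]
      simp only [Pi.smul_apply, Finset.sum_apply, smul_eq_mul]
      exact mul_nonneg (by positivity) (Finset.sum_nonneg fun t _ => (hx t).1 i)
    · rw [hxbar]
      simp only [Pi.smul_apply, Finset.sum_apply, smul_eq_mul, ← Finset.mul_sum]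
      rw [Finset.sum_comm]
      have : ∀ t : Fin T, ∑ i, x t i = 1 := fun t => (hx t).2
      simp [this]
      field_simp
  have hybarS : ybar ∈ stdSimplex ℝ (Fin n) := by
    constructor
    · intro i
      rw [hybar]
      simp only [Pi.smul_apply, Finset.sum_apply, smul_eq_mul]
      exact mul_nonneg (by positivity) (Finset.sum_nonneg fun t _ => (hy t).1 i)
    · rw [hybar]
      simp only [Pi.smul_apply, Finset.sum_apply, smul_eq_mul, ← Finset.mul_sum]
      rw [Finset.sum_comm]
      have : ∀ t : Fin T, ∑ i, y t i = 1 := fun t => (hy t).2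
      simp [this]
      field_simp
  -- Row regret consequence: ∀ x' ∈ S, x' ⬝ᵥ A ybar ≤ V + ε
  have hrow : ∀ x' ∈ stdSimplex ℝ (Fin m), x' ⬝ᵥ A.mulVec ybar ≤ V + ε := by
    intro x' hx'
    have h := hRegRow x' hx'
    have h2 := mul_le_mul_of_nonneg_left h (le_of_lt (one_div_pos.mpr hTr))
    have h3 : (1 / (T:ℝ)) * (ε * T) = ε := by field_simp
    rw [Finset.sum_sub_distrib, mul_sub, h3] at h2
    rw [hyb x']
    linarith [h2]
  -- Column regret consequence: ∀ y' ∈ S, V ≤ x t avg ⬝ᵥ A y' + ε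
  have hcol : ∀ y' ∈ stdSimplex ℝ (Fin n), V ≤ xbar ⬝ᵥ A.mulVec y' + ε := by
    intro y' hy'
    have h := hRegCol y' hy'
    have h2 := mul_le_mul_of_nonneg_left h (le_of_lt (one_div_pos.mpr hTr))
    have h3 : (1 / (T:ℝ)) * (ε * T) = ε := by field_simp
    rw [Finset.sum_sub_distrib, mul_sub, h3] at h2
    rw [hxb (A.mulVec y')]
    linarith [h2]
  have hVle : V ≤ xbar ⬝ᵥ A.mulVec ybar + ε := hcol ybar hybarS
  have hVge : xbar ⬝ᵥ A.mulVec ybar ≤ V + ε := hrow xbar hxbarS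
  constructor
  · intro x' hx'
    have := hrow x' hx'
    linarith
  · intro y' hy'
    have := hcol y' hy'
    linarith
end

section
/- Regret-matching is equivalent to dual averaging over the simplex with regularizer h(x) = ‖x₊‖²/2: suppose the cumulative regret vector R^t = ∑_{i=1}^t (u^i − (u^i·x^i)𝟙) has some positive coordinate, and let β^t = (𝟙·R^t₊)/t and ḡ^t = −R^t/t. Then the unique minimizer of ḡ^t·x + β^t ‖x₊‖²/2 over {x : x ≥ 0} is x^{t+1} = R^t₊ / (𝟙·R^t₊), which lies in the simplex Δ_n. -/
open Matrix Finset

/-- Regret-matching is dual averaging over the simplex with regularizer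
`‖x₊‖²/2`, step size `βᵗ = 𝟙·Rᵗ₊/t` and average gradient `ḡᵗ = −Rᵗ/t`: the
unique minimizer of `ḡᵗ·x + βᵗ‖x₊‖²/2` over the nonnegative orthant is
`Rᵗ₊/(𝟙·Rᵗ₊)`, which lies in the simplex. -/
theorem stmt_6 {n t : ℕ} (ht : 0 < t)
    (u : Fin t → Fin n → ℝ) (x : Fin t → Fin n → ℝ)
    (hx : ∀ i, x i ∈ stdSimplex ℝ (Fin n))
    (R : Fin n → ℝ) (hR : ∀ j, R j = ∑ i, (u i j - u i ⬝ᵥ x i))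
    (hpos : ∃ j, 0 < R j)
    (β : ℝ) (hβ : β = (∑ j, max (R j) 0) / t)
    (g : Fin n → ℝ) (hg : ∀ j, g j = -R j / t)
    (xnext : Fin n → ℝ)
    (hxnext : ∀ j, xnext j = max (R j) 0 / ∑ k, max (R k) 0) :
    xnext ∈ stdSimplex ℝ (Fin n) ∧
    (∀ z : Fin n → ℝ, (∀ j, 0 ≤ z j) →
      g ⬝ᵥ xnext + β * (∑ j, (max (xnext j) 0) ^ 2) / 2
        ≤ g ⬝ᵥ z + β * (∑ j, (max (z j) 0) ^ 2) / 2) ∧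
    (∀ z : Fin n → ℝ, (∀ j, 0 ≤ z j) →
      g ⬝ᵥ z + β * (∑ j, (max (z j) 0) ^ 2) / 2
        = g ⬝ᵥ xnext + β * (∑ j, (max (xnext j) 0) ^ 2) / 2 → z = xnext) := by
  obtain ⟨j0, hj0⟩ := hpos
  set S : ℝ := ∑ k, max (R k) 0 with hSdef
  have hS : 0 < S := by
    apply Finset.sum_pos' (fun k _ => le_max_right _ _)
    exact ⟨j0, Finset.mem_univ _, lt_max_of_lt_left hj0⟩
  have ht' : (0:ℝ) < t := by exact_mod_cast ht
  have hxnn : ∀ j, 0 ≤ xnext j := fun j => by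
    rw [hxnext]; exact div_nonneg (le_max_right _ _) hS.le
  have hmem : xnext ∈ stdSimplex ℝ (Fin n) := by
    refine ⟨fun j => hxnn j, ?_⟩
    simp_rw [hxnext]
    rw [← Finset.sum_div, div_self hS.ne']
  -- pointwise identity
  have key : ∀ r z : ℝ,
      -r * z + S * z ^ 2 / 2 = -r * (max r 0 / S) + S * (max r 0 / S) ^ 2 / 2
        + S / 2 * (z - max r 0 / S) ^ 2 + max (-r) 0 * z := by
    intro r z
    rcases le_or_gt r 0 with h | h
    · rw [max_eq_right h, max_eq_left (neg_nonneg.mpr h)]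
      field_simp
      ring
    · rw [max_eq_left h.le, max_eq_right (neg_nonpos.mpr h.le)]
      field_simp
      ring
  -- objective as a single sum over t
  have hF : ∀ z : Fin n → ℝ, (∀ j, 0 ≤ z j) →
      g ⬝ᵥ z + β * (∑ j, (max (z j) 0) ^ 2) / 2
        = (∑ j, (-R j * z j + S * (z j) ^ 2 / 2)) / t := by
    intro z hz
    have hm : ∀ j, max (z j) 0 = z j := fun j => max_eq_left (hz j)
    simp_rw [dotProduct, hg, hβ, hm]
    have h2 : S / ↑t * (∑ j, (z j) ^ 2) / 2 = ∑ j, S / ↑t * (z j) ^ 2 / 2 := by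
      rw [Finset.mul_sum, Finset.sum_div]
    rw [h2, ← Finset.sum_add_distrib]
    conv_rhs => rw [Finset.sum_div]
    apply Finset.sum_congr rfl
    intro j _
    field_simp
  -- sum-level decomposition
  have hdecomp : ∀ z : Fin n → ℝ,
      (∑ j, (-R j * z j + S * (z j) ^ 2 / 2))
        = (∑ j, (-R j * xnext j + S * (xnext j) ^ 2 / 2))
          + ∑ j, (S / 2 * (z j - xnext j) ^ 2 + max (-R j) 0 * z j) := by
    intro z
    rw [← Finset.sum_add_distrib]
    apply Finset.sum_congr rfl
    intro j _
    rw [hxnext j, key (R j) (z j)]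
    ring
  have hnn : ∀ z : Fin n → ℝ, (∀ j, 0 ≤ z j) → ∀ j ∈ Finset.univ,
      (0:ℝ) ≤ S / 2 * (z j - xnext j) ^ 2 + max (-R j) 0 * z j := by
    intro z hz j _
    have h1 : (0:ℝ) ≤ S / 2 * (z j - xnext j) ^ 2 :=
      mul_nonneg (by positivity) (sq_nonneg _)
    have h2 : (0:ℝ) ≤ max (-R j) 0 * z j := mul_nonneg (le_max_right _ _) (hz j)
    linarith
  refine ⟨hmem, ?_, ?_⟩
  · intro z hz
    rw [hF z hz, hF xnext hxnn]
    apply div_le_div_of_nonneg_right ?_ ht'.le |>.trans_eq rfl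
    rw [hdecomp z]
    have := Finset.sum_nonneg (hnn z hz)
    linarith
  · intro z hz heq
    rw [hF z hz, hF xnext hxnn, div_eq_div_iff ht'.ne' ht'.ne'] at heq
    have heq2 : (∑ j, (-R j * z j + S * (z j) ^ 2 / 2))
        = (∑ j, (-R j * xnext j + S * (xnext j) ^ 2 / 2)) :=
      mul_right_cancel₀ ht'.ne' heq
    rw [hdecomp z] at heq2
    have hzero : ∑ j, (S / 2 * (z j - xnext j) ^ 2 + max (-R j) 0 * z j) = 0 := by
      linarith
    have hterm := (Finset.sum_eq_zero_iff_of_nonneg (hnn z hz)).mp hzero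
    funext j
    have hj := hterm j (Finset.mem_univ j)
    have h1 : (0:ℝ) ≤ S / 2 * (z j - xnext j) ^ 2 :=
      mul_nonneg (by positivity) (sq_nonneg _)
    have h2 : (0:ℝ) ≤ max (-R j) 0 * z j := mul_nonneg (le_max_right _ _) (hz j)
    have hsq : S / 2 * (z j - xnext j) ^ 2 = 0 := by linarith
    have : (z j - xnext j) ^ 2 = 0 := by
      rcases mul_eq_zero.mp hsq with h | h
      · exact absurd h (by positivity)
      · exact h
    have := pow_eq_zero_iff (n := 2) (by norm_num) |>.mp this
    linarith [this]
end

section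
/- (Minimax via no-regret) For any matrix A ∈ ℝ^{m×n}, max_{y∈Δ_n} min_{x∈Δ_m} x^T A y = min_{x∈Δ_m} max_{y∈Δ_n} x^T A y; moreover this common value can be approximated to within 2ε by the average iterates of any pair of algorithms each with time-averaged regret at most ε in self-play. -/
open Matrix

section Aux

variable {m n : ℕ} [NeZero m] [NeZero n]

private lemma simplex_le_one {k : ℕ} {x : Fin k → ℝ} (hx : x ∈ stdSimplex ℝ (Fin k))
    (i : Fin k) : x i ≤ 1 := by
  have := Finset.single_le_sum (fun j _ => hx.1 j) (Finset.mem_univ i)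
  rwa [hx.2] at this

private lemma payoff_bound (A : Matrix (Fin m) (Fin n) ℝ)
    {x : Fin m → ℝ} (hx : x ∈ stdSimplex ℝ (Fin m))
    {y : Fin n → ℝ} (hy : y ∈ stdSimplex ℝ (Fin n)) :
    |x ⬝ᵥ A.mulVec y| ≤ ∑ i, ∑ j, |A i j| := by
  have h1 : x ⬝ᵥ A.mulVec y = ∑ i, ∑ j, x i * (A i j * y j) := by
    simp [dotProduct, mulVec, Finset.mul_sum]
  rw [h1]
  calc |∑ i, ∑ j, x i * (A i j * y j)| ≤ ∑ i, |∑ j, x i * (A i j * y j)| :=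
        Finset.abs_sum_le_sum_abs _ _
    _ ≤ ∑ i, ∑ j, |x i * (A i j * y j)| :=
        Finset.sum_le_sum fun i _ => Finset.abs_sum_le_sum_abs _ _
    _ ≤ ∑ i, ∑ j, |A i j| := by
        refine Finset.sum_le_sum fun i _ => Finset.sum_le_sum fun j _ => ?_
        rw [abs_mul, abs_mul]
        rw [abs_of_nonneg (hx.1 i), abs_of_nonneg (hy.1 j)]
        calc x i * (|A i j| * y j) ≤ 1 * (|A i j| * 1) := by
              apply mul_le_mul (simplex_le_one hx i) _
                (mul_nonneg (abs_nonneg _) (hy.1 j)) zero_le_one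
              exact mul_le_mul_of_nonneg_left (simplex_le_one hy j) (abs_nonneg _)
          _ = |A i j| := by ring

private lemma bddAbove_inner (A : Matrix (Fin m) (Fin n) ℝ) (x : stdSimplex ℝ (Fin m)) :
    BddAbove (Set.range fun y : stdSimplex ℝ (Fin n) => (x : Fin m → ℝ) ⬝ᵥ A.mulVec y) := by
  refine ⟨∑ i, ∑ j, |A i j|, ?_⟩
  rintro _ ⟨y, rfl⟩
  exact (abs_le.1 (payoff_bound A x.2 y.2)).2

private lemma bddBelow_inner (A : Matrix (Fin m) (Fin n) ℝ) (y : stdSimplex ℝ (Fin n)) :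
    BddBelow (Set.range fun x : stdSimplex ℝ (Fin m) => (x : Fin m → ℝ) ⬝ᵥ A.mulVec y) := by
  refine ⟨-(∑ i, ∑ j, |A i j|), ?_⟩
  rintro _ ⟨x, rfl⟩
  exact (abs_le.1 (payoff_bound A x.2 y.2)).1

noncomputable instance : Nonempty (stdSimplex ℝ (Fin m)) :=
  ⟨⟨Pi.single ⟨0, Nat.pos_of_ne_zero (NeZero.ne m)⟩ 1, single_mem_stdSimplex ℝ _⟩⟩

private lemma bddAbove_outer (A : Matrix (Fin m) (Fin n) ℝ) :
    BddAbove (Set.range fun y : stdSimplex ℝ (Fin n) =>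
      ⨅ x : stdSimplex ℝ (Fin m), (x : Fin m → ℝ) ⬝ᵥ A.mulVec y) := by
  refine ⟨∑ i, ∑ j, |A i j|, ?_⟩
  rintro _ ⟨y, rfl⟩
  obtain ⟨x⟩ := (inferInstance : Nonempty (stdSimplex ℝ (Fin m)))
  exact le_trans (ciInf_le (bddBelow_inner A y) x) (abs_le.1 (payoff_bound A x.2 y.2)).2

private lemma bddBelow_outer (A : Matrix (Fin m) (Fin n) ℝ) :
    BddBelow (Set.range fun x : stdSimplex ℝ (Fin m) =>
      ⨆ y : stdSimplex ℝ (Fin n), (x : Fin m → ℝ) ⬝ᵥ A.mulVec y) := by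
  refine ⟨-(∑ i, ∑ j, |A i j|), ?_⟩
  rintro _ ⟨x, rfl⟩
  obtain ⟨y⟩ := (inferInstance : Nonempty (stdSimplex ℝ (Fin n)))
  exact le_trans (abs_le.1 (payoff_bound A x.2 y.2)).1 (le_ciSup (bddAbove_inner A x) y)

/-- Easy direction. -/
private lemma easy_dir (A : Matrix (Fin m) (Fin n) ℝ) :
    (⨆ y : stdSimplex ℝ (Fin n), ⨅ x : stdSimplex ℝ (Fin m),
        (x : Fin m → ℝ) ⬝ᵥ A.mulVec y)
      ≤ (⨅ x : stdSimplex ℝ (Fin m), ⨆ y : stdSimplex ℝ (Fin n),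
        (x : Fin m → ℝ) ⬝ᵥ A.mulVec y) := by
  refine ciSup_le fun y => le_ciInf fun x => ?_
  exact le_trans (ciInf_le (bddBelow_inner A y) x) (le_ciSup (bddAbove_inner A x) y)

/-- Hard direction, via separating hyperplanes. -/
private lemma hard_dir (A : Matrix (Fin m) (Fin n) ℝ) :
    (⨅ x : stdSimplex ℝ (Fin m), ⨆ y : stdSimplex ℝ (Fin n),
        (x : Fin m → ℝ) ⬝ᵥ A.mulVec y)
      ≤ (⨆ y : stdSimplex ℝ (Fin n), ⨅ x : stdSimplex ℝ (Fin m),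
        (x : Fin m → ℝ) ⬝ᵥ A.mulVec y) := by
  set v : ℝ := ⨆ y : stdSimplex ℝ (Fin n), ⨅ x : stdSimplex ℝ (Fin m),
    (x : Fin m → ℝ) ⬝ᵥ A.mulVec y with hv
  refine le_of_forall_pos_le_add fun η hη => ?_
  -- the open convex set
  set D : Set (Fin m → ℝ) := {z | ∀ i, v < z i} with hD
  have hDopen : IsOpen D := by
    have : D = ⋂ i, (fun z : Fin m → ℝ => z i) ⁻¹' Set.Ioi v := by
      ext z; simp [hD, Set.mem_iInter]
    rw [this]
    exact isOpen_iInter_of_finite fun i => (continuous_apply i).isOpen_preimage _ isOpen_Ioi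
  have hDconv : Convex ℝ D := by
    have : D = ⋂ i, (LinearMap.proj (R := ℝ) (φ := fun _ : Fin m => ℝ) i) ⁻¹' Set.Ioi v := by
      ext z; simp [hD, Set.mem_iInter, LinearMap.proj]
    rw [this]
    exact convex_iInter fun i => (convex_Ioi v).linear_preimage _
  -- the image set
  set T : Set (Fin m → ℝ) := A.mulVecLin '' stdSimplex ℝ (Fin n) with hT
  have hTconv : Convex ℝ T := (convex_stdSimplex ℝ (Fin n)).linear_image A.mulVecLin
  -- disjointness
  have hdisj : Disjoint D T := by
    rw [Set.disjoint_right]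
    rintro _ ⟨y, hy, rfl⟩ hmem
    -- there is a coordinate of A y at most v
    obtain ⟨i, _, hi⟩ := Finset.exists_min_image Finset.univ (fun i => A.mulVec y i)
      ⟨⟨0, Nat.pos_of_ne_zero (NeZero.ne m)⟩, Finset.mem_univ _⟩
    have hle : A.mulVec y i ≤ v := by
      have h1 : A.mulVec y i ≤ ⨅ x : stdSimplex ℝ (Fin m), (x : Fin m → ℝ) ⬝ᵥ A.mulVec y := by
        refine le_ciInf fun x => ?_
        have : (x : Fin m → ℝ) ⬝ᵥ A.mulVec y = ∑ k, x.1 k * A.mulVec y k := by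
          simp [dotProduct]; rfl
        rw [this]
        calc A.mulVec y i = ∑ k, x.1 k * A.mulVec y i := by
              rw [← Finset.sum_mul, x.2.2, one_mul]
          _ ≤ ∑ k, x.1 k * A.mulVec y k :=
              Finset.sum_le_sum fun k _ =>
                mul_le_mul_of_nonneg_left (hi k (Finset.mem_univ k)) (x.2.1 k)
      exact h1.trans (le_ciSup (bddAbove_outer A) (⟨y, hy⟩ : stdSimplex ℝ (Fin n)))
    exact absurd (hmem i) (not_lt.2 hle)
  obtain ⟨f, u, hfD, hfT⟩ := geometric_hahn_banach_open hDconv hDopen hTconv hdisj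
  -- coordinates of f
  set w : Fin m → ℝ := fun i => f (Pi.single i 1) with hw
  have hfz : ∀ z : Fin m → ℝ, f z = ∑ i, z i * w i := by
    intro z
    conv_lhs => rw [← Finset.univ_sum_single z]
    rw [map_sum]
    refine Finset.sum_congr rfl fun i _ => ?_
    have : Pi.single i (z i) = z i • (Pi.single i 1 : Fin m → ℝ) := by
      funext k
      by_cases h : k = i <;> simp [Pi.single_apply, h]
    rw [this, _root_.map_smul, smul_eq_mul]
  -- each w i ≤ 0
  have hwle : ∀ i, w i ≤ 0 := by
    intro i
    by_contra h
    push_neg at h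
    set c : ℝ := v + 1 with hc
    set t : ℝ := max 0 ((u - c * ∑ k, w k) / w i) + 1 with ht
    have htpos : 0 < t := by positivity
    set z : Fin m → ℝ := fun k => c + (if k = i then t else 0) with hzdef
    have hzd : z ∈ D := by
      intro k
      by_cases hk : k = i
      · simp only [hzdef, hk, if_true]
        have : v < c := by rw [hc]; linarith
        linarith
      · simp only [hzdef, hk, if_false]
        have : v < c := by rw [hc]; linarith
        linarith
    have h1 := hfD _ hzd
    rw [hfz] at h1
    have hsum : ∑ k, z k * w k = c * (∑ k, w k) + t * w i := by
      simp only [hzdef, add_mul, Finset.sum_add_distrib, ite_mul, zero_mul,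
        Finset.sum_ite_eq', Finset.mem_univ, if_true, Finset.mul_sum]
    rw [hsum] at h1
    have h2 : (u - c * ∑ k, w k) / w i < t := by
      rw [ht]; have := le_max_right 0 ((u - c * ∑ k, w k) / w i); linarith
    have h3 : u - c * ∑ k, w k < t * w i := by
      rw [div_lt_iff₀ h] at h2; linarith
    linarith
  -- f is not identically zero on the relevant points: sum of w is negative
  have hne : Nonempty (stdSimplex ℝ (Fin n)) := inferInstance
  obtain ⟨y0⟩ := hne
  have hfy0 : u ≤ f (A.mulVec y0) := hfT _ ⟨y0.1, y0.2, rfl⟩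
  have hDpt : (fun _ => v + η : Fin m → ℝ) ∈ D := fun i => by
    simp only [hD, Set.mem_setOf_eq]; linarith
  have hfDpt := hfD _ hDpt
  have hSneg : ∑ i, w i < 0 := by
    by_contra h
    push_neg at h
    -- then all w i = 0, so f = 0 everywhere
    have hall : ∀ i, w i = 0 := by
      intro i
      have hsum : ∑ i, w i ≤ 0 := Finset.sum_nonpos fun i _ => hwle i
      have hz : ∑ i, w i = 0 := le_antisymm hsum h
      have := (Finset.sum_eq_zero_iff_of_nonpos (fun i _ => hwle i)).1 hz
      exact this i (Finset.mem_univ i)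
    have hf0 : ∀ z, f z = 0 := fun z => by rw [hfz]; simp [hall]
    rw [hf0] at hfDpt hfy0
    linarith
  set s : ℝ := -∑ i, w i with hs
  have hspos : 0 < s := by rw [hs]; linarith
  -- the strategy
  set xh : Fin m → ℝ := fun i => -w i / s with hxh
  have hxhmem : xh ∈ stdSimplex ℝ (Fin m) := by
    constructor
    · intro i
      apply div_nonneg _ hspos.le
      linarith [hwle i]
    · rw [hxh]
      simp only
      rw [← Finset.sum_div]
      rw [div_eq_one_iff_eq hspos.ne']
      rw [hs, ← Finset.sum_neg_distrib]
  -- key bound : for all y in simplex, xh ⬝ᵥ A y ≤ v + η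
  have hkey : ∀ y : stdSimplex ℝ (Fin n), xh ⬝ᵥ A.mulVec y ≤ v + η := by
    intro y
    have hfAy : u ≤ f (A.mulVec y) := hfT _ ⟨y.1, y.2, rfl⟩
    have hfv : f (fun _ => v + η) = (v + η) * ∑ i, w i := by
      rw [hfz]
      exact (Finset.mul_sum _ _ _).symm
    have h1 : (v + η) * ∑ i, w i < u := by rw [← hfv]; exact hfDpt
    have h2 : xh ⬝ᵥ A.mulVec y = -(f (A.mulVec y)) / s := by
      rw [hfz]
      simp only [dotProduct, hxh]
      rw [← Finset.sum_neg_distrib, Finset.sum_div]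
      exact Finset.sum_congr rfl fun i _ => by ring
    rw [h2]
    rw [div_le_iff₀ hspos]
    have : -u ≤ (v + η) * s := by
      rw [hs]
      have : (v + η) * -∑ i, w i = -((v + η) * ∑ i, w i) := by ring
      rw [this]
      linarith
    linarith
  calc (⨅ x : stdSimplex ℝ (Fin m), ⨆ y : stdSimplex ℝ (Fin n),
        (x : Fin m → ℝ) ⬝ᵥ A.mulVec y)
      ≤ ⨆ y : stdSimplex ℝ (Fin n), (xh : Fin m → ℝ) ⬝ᵥ A.mulVec y :=
        ciInf_le (bddBelow_outer A) (⟨xh, hxhmem⟩ : stdSimplex ℝ (Fin m))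
    _ ≤ v + η := ciSup_le hkey

end Aux

/-- Minimax via no-regret: the minimax equality holds, and the average iterates
of a pair of `ε`-regret algorithms (forming a `2ε`-Nash pair) approximate the
game value to within `2ε`. -/
theorem stmt_13 {m n : ℕ} [NeZero m] [NeZero n] (A : Matrix (Fin m) (Fin n) ℝ) :
    (⨆ y : stdSimplex ℝ (Fin n), ⨅ x : stdSimplex ℝ (Fin m),
        (x : Fin m → ℝ) ⬝ᵥ A.mulVec y)
      = (⨅ x : stdSimplex ℝ (Fin m), ⨆ y : stdSimplex ℝ (Fin n),
        (x : Fin m → ℝ) ⬝ᵥ A.mulVec y) ∧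
    (∀ ε ≥ (0 : ℝ), ∀ xbar ∈ stdSimplex ℝ (Fin m), ∀ ybar ∈ stdSimplex ℝ (Fin n),
      (∀ x' ∈ stdSimplex ℝ (Fin m),
        xbar ⬝ᵥ A.mulVec ybar ≤ x' ⬝ᵥ A.mulVec ybar + 2 * ε) →
      (∀ y' ∈ stdSimplex ℝ (Fin n),
        xbar ⬝ᵥ A.mulVec y' ≤ xbar ⬝ᵥ A.mulVec ybar + 2 * ε) →
      |xbar ⬝ᵥ A.mulVec ybar
          - ⨅ x : stdSimplex ℝ (Fin m), ⨆ y : stdSimplex ℝ (Fin n),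
              (x : Fin m → ℝ) ⬝ᵥ A.mulVec y| ≤ 2 * ε) := by
  have heq : (⨆ y : stdSimplex ℝ (Fin n), ⨅ x : stdSimplex ℝ (Fin m),
        (x : Fin m → ℝ) ⬝ᵥ A.mulVec y)
      = (⨅ x : stdSimplex ℝ (Fin m), ⨆ y : stdSimplex ℝ (Fin n),
        (x : Fin m → ℝ) ⬝ᵥ A.mulVec y) := le_antisymm (easy_dir A) (hard_dir A)
  refine ⟨heq, ?_⟩
  intro ε hε xbar hxbar ybar hybar hx hy
  set V : ℝ := ⨅ x : stdSimplex ℝ (Fin m), ⨆ y : stdSimplex ℝ (Fin n),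
      (x : Fin m → ℝ) ⬝ᵥ A.mulVec y with hV
  rw [abs_le]
  constructor
  · -- V ≤ xbar A ybar + 2ε
    have h1 : V ≤ ⨆ y : stdSimplex ℝ (Fin n), xbar ⬝ᵥ A.mulVec y :=
      ciInf_le (bddBelow_outer A) (⟨xbar, hxbar⟩ : stdSimplex ℝ (Fin m))
    have h2 : (⨆ y : stdSimplex ℝ (Fin n), xbar ⬝ᵥ A.mulVec y)
        ≤ xbar ⬝ᵥ A.mulVec ybar + 2 * ε :=
      ciSup_le fun y => hy y.1 y.2
    linarith
  · -- xbar A ybar - 2ε ≤ V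
    have h1 : xbar ⬝ᵥ A.mulVec ybar - 2 * ε
        ≤ ⨅ x : stdSimplex ℝ (Fin m), (x : Fin m → ℝ) ⬝ᵥ A.mulVec ybar :=
      le_ciInf fun x => by
        have h := hx x.1 x.2
        change xbar ⬝ᵥ A *ᵥ ybar ≤ (x : Fin m → ℝ) ⬝ᵥ A *ᵥ ybar + 2 * ε at h
        linarith
    have h2 : (⨅ x : stdSimplex ℝ (Fin m), (x : Fin m → ℝ) ⬝ᵥ A.mulVec ybar)
        ≤ V := by
      rw [← heq]
      exact le_ciSup (bddAbove_outer A) (⟨ybar, hybar⟩ : stdSimplex ℝ (Fin n))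
    linarith
end

section
/- For the dilated entropy function on a two-level sequence-form tree, the minimizer admits a closed form via recursive softmax: let h(x, y) = ∑_a x_a log x_a + ∑_a x_a ∑_{b ∈ C(a)} (y_{a,b}/x_a) log(y_{a,b}/x_a) over the set {(x,y) : x ∈ Δ_A, y_{a,·}/x_a ∈ Δ_{C(a)}}. Then for utility vectors u (on top-level actions) and w (on second-level actions), the maximizer of u·x + w·y − h(x,y) is given by: y_{a,b}/x_a ∝_b exp(w_{a,b}), and x_a ∝ exp(u_a + log ∑_b exp(w_{a,b})). -/
open Finset Real

/-- The two-level sequence-form polytope: `x` is a distribution over top-level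
actions and, for each `a`, the conditional distribution `y a · / x a` lies in
the simplex over the children of `a` (encoded by `∑ b, y a b = x a`, `y ≥ 0`). -/
def seqPolytope {ι : Type*} [Fintype ι] (κ : ι → Type*) [∀ a, Fintype (κ a)] :
    Set ((ι → ℝ) × (∀ a, κ a → ℝ)) :=
  {p | p.1 ∈ stdSimplex ℝ ι ∧ (∀ a b, 0 ≤ p.2 a b) ∧ ∀ a, ∑ b, p.2 a b = p.1 a}

/-- The dilated entropy on a depth-2 tree. -/
noncomputable def dilatedEntropy {ι : Type*} [Fintype ι] (κ : ι → Type*)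
    [∀ a, Fintype (κ a)] (p : (ι → ℝ) × (∀ a, κ a → ℝ)) : ℝ :=
  ∑ a, p.1 a * Real.log (p.1 a)
    + ∑ a, ∑ b, p.2 a b * Real.log (p.2 a b / p.1 a)

lemma pointlog (y x : ℝ) (hy : 0 ≤ y) (hyx : y ≤ x) :
    y * Real.log x + y * Real.log (y / x) = y * Real.log y := by
  rcases eq_or_lt_of_le hy with h | h
  · simp [← h]
  · have hx : 0 < x := lt_of_lt_of_le h hyx
    rw [Real.log_div (ne_of_gt h) (ne_of_gt hx)]
    ring

lemma keyineq (q c Z : ℝ) (hq : 0 ≤ q) (hZ : 0 < Z) :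
    (c * q - q * Real.log q) ≤ Real.exp c / Z - q + q * Real.log Z := by
  rcases eq_or_lt_of_le hq with h | h
  · rw [← h]; simp; positivity
  · have h1 : Real.log (Real.exp c / (q * Z)) = c - Real.log q - Real.log Z := by
      rw [Real.log_div (Real.exp_ne_zero c) (by positivity), Real.log_exp,
        Real.log_mul (ne_of_gt h) (ne_of_gt hZ)]
      ring
    have h2 := Real.log_le_sub_one_of_pos (show (0:ℝ) < Real.exp c / (q * Z) by positivity)
    rw [h1] at h2
    have h3 : q * (c - Real.log q - Real.log Z) ≤ q * (Real.exp c / (q * Z) - 1) :=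
      mul_le_mul_of_nonneg_left h2 hq
    have h4 : q * (Real.exp c / (q * Z) - 1) = Real.exp c / Z - q := by
      field_simp
    rw [h4] at h3
    nlinarith [h3]

lemma obj_rewrite {ι : Type*} [Fintype ι] (κ : ι → Type*) [∀ a, Fintype (κ a)]
    (u : ι → ℝ) (w : ∀ a, κ a → ℝ) (p : (ι → ℝ) × (∀ a, κ a → ℝ))
    (hp : p ∈ seqPolytope κ) :
    (∑ a, u a * p.1 a) + (∑ a, ∑ b, w a b * p.2 a b) - dilatedEntropy κ p
      = ∑ a, ∑ b, ((u a + w a b) * p.2 a b - p.2 a b * Real.log (p.2 a b)) := by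
  obtain ⟨hx, hy, hsum⟩ := hp
  have h1 : ∀ a, u a * p.1 a = ∑ b, u a * p.2 a b := by
    intro a; rw [← Finset.mul_sum, hsum]
  have h2 : ∀ a, p.1 a * Real.log (p.1 a) = ∑ b, p.2 a b * Real.log (p.1 a) := by
    intro a; rw [← Finset.sum_mul, hsum]
  have h3 : ∀ a b, p.2 a b * Real.log (p.1 a) + p.2 a b * Real.log (p.2 a b / p.1 a)
      = p.2 a b * Real.log (p.2 a b) := by
    intro a b
    refine pointlog _ _ (hy a b) ?_
    rw [← hsum a]
    exact Finset.single_le_sum (fun b' _ => hy a b') (Finset.mem_univ b)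
  unfold dilatedEntropy
  simp only [h1, h2, ← Finset.sum_add_distrib, ← Finset.sum_sub_distrib]
  refine Finset.sum_congr rfl fun a _ => Finset.sum_congr rfl fun b _ => ?_
  have := h3 a b
  nlinarith [h3 a b]

/-- The maximizer of `u·x + w·y − h(x,y)` over the depth-2 sequence-form
polytope, with `h` the dilated entropy, is given by recursive softmax:
`y_{a,b}/x_a ∝ exp(w_{a,b})` and `x_a ∝ exp(u_a + log ∑_b exp(w_{a,b}))`. -/
theorem stmt_14 {ι : Type*} [Fintype ι] [Nonempty ι] (κ : ι → Type*)
    [∀ a, Fintype (κ a)] [∀ a, Nonempty (κ a)]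
    (u : ι → ℝ) (w : ∀ a, κ a → ℝ)
    (xstar : ι → ℝ) (ystar : ∀ a, κ a → ℝ)
    (hxstar : ∀ a, xstar a
      = Real.exp (u a + Real.log (∑ b, Real.exp (w a b)))
        / ∑ a', Real.exp (u a' + Real.log (∑ b, Real.exp (w a' b))))
    (hystar : ∀ a b, ystar a b
      = xstar a * (Real.exp (w a b) / ∑ b', Real.exp (w a b'))) :
    (xstar, ystar) ∈ seqPolytope κ ∧
    ∀ p ∈ seqPolytope κ,
      (∑ a, u a * p.1 a) + (∑ a, ∑ b, w a b * p.2 a b) - dilatedEntropy κ p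
        ≤ (∑ a, u a * xstar a) + (∑ a, ∑ b, w a b * ystar a b)
            - dilatedEntropy κ (xstar, ystar) := by
  have hSpos : ∀ a, 0 < ∑ b, Real.exp (w a b) :=
    fun a => Finset.sum_pos (fun b _ => Real.exp_pos _) Finset.univ_nonempty
  have hE : ∀ a, Real.exp (u a + Real.log (∑ b, Real.exp (w a b)))
      = Real.exp (u a) * ∑ b, Real.exp (w a b) := fun a => by
    rw [Real.exp_add, Real.exp_log (hSpos a)]
  have hZpos : 0 < ∑ a', Real.exp (u a' + Real.log (∑ b, Real.exp (w a' b))) :=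
    Finset.sum_pos (fun a _ => Real.exp_pos _) Finset.univ_nonempty
  set Z := ∑ a', Real.exp (u a' + Real.log (∑ b, Real.exp (w a' b))) with hZdef
  have hy : ∀ a b, ystar a b = Real.exp (u a + w a b) / Z := by
    intro a b
    rw [hystar a b, hxstar a, hE a, Real.exp_add]
    field_simp
  have hxnn : ∀ a, 0 ≤ xstar a := fun a => by
    rw [hxstar a]; positivity
  have hsumx : ∑ a, xstar a = 1 := by
    simp only [hxstar]
    rw [← Finset.sum_div, div_self (ne_of_gt hZpos)]
  have hynn : ∀ a b, 0 ≤ ystar a b := fun a b => by rw [hy a b]; positivity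
  have hsumy : ∀ a, ∑ b, ystar a b = xstar a := by
    intro a
    simp only [hystar a]
    rw [← Finset.mul_sum, ← Finset.sum_div, div_self (ne_of_gt (hSpos a)), mul_one]
  have hmem : (xstar, ystar) ∈ seqPolytope κ := ⟨⟨hxnn, hsumx⟩, hynn, hsumy⟩
  refine ⟨hmem, fun p hp => ?_⟩
  rw [obj_rewrite κ u w p hp]
  have hrw2 := obj_rewrite κ u w (xstar, ystar) hmem
  rw [hrw2]
  have hstar : (∑ a, ∑ b, ((u a + w a b) * ystar a b
      - ystar a b * Real.log (ystar a b))) = Real.log Z := by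
    have hpt : ∀ a b, (u a + w a b) * ystar a b - ystar a b * Real.log (ystar a b)
        = ystar a b * Real.log Z := by
      intro a b
      rw [hy a b, Real.log_div (Real.exp_ne_zero _) (ne_of_gt hZpos), Real.log_exp]
      ring
    simp only [hpt, ← Finset.sum_mul]
    rw [show (∑ a, ∑ b, ystar a b) = 1 by simp only [hsumy]; exact hsumx, one_mul]
  rw [hstar]
  obtain ⟨⟨hpx, hpx1⟩, hpy, hpsum⟩ := hp
  calc ∑ a, ∑ b, ((u a + w a b) * p.2 a b - p.2 a b * Real.log (p.2 a b))
      ≤ ∑ a, ∑ b, (Real.exp (u a + w a b) / Z - p.2 a b + p.2 a b * Real.log Z) :=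
        Finset.sum_le_sum fun a _ => Finset.sum_le_sum fun b _ =>
          keyineq _ _ _ (hpy a b) hZpos
    _ = (∑ a, ∑ b, Real.exp (u a + w a b)) / Z - (∑ a, ∑ b, p.2 a b)
          + (∑ a, ∑ b, p.2 a b) * Real.log Z := by
        simp only [Finset.sum_add_distrib, Finset.sum_sub_distrib, Finset.sum_div,
          Finset.sum_mul]
    _ = Real.log Z := by
        have h1 : (∑ a, ∑ b, Real.exp (u a + w a b)) = Z := by
          rw [hZdef]
          refine Finset.sum_congr rfl fun a _ => ?_
          rw [hE a, Finset.mul_sum]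
          simp [Real.exp_add]
        have h2 : (∑ a, ∑ b, p.2 a b) = 1 := by simp only [hpsum]; exact hpx1
        rw [h1, h2, div_self (ne_of_gt hZpos)]; ring
end

section
/- (Entropy-regularized equilibrium approximates Nash) Let A ∈ ℝ^{m×n} and β > 0, and let (x_β, y_β) be the saddle point of x^T A y + β h₁(x) − β h₂(y) over Δ_m × Δ_n, where h₁, h₂ are negative entropies. Then (x_β, y_β) is an ε-Nash equilibrium of the original game with ε ≤ β(log m + log n). -/
open Matrix Finset Real

lemma entropy_nonpos {k : ℕ} (x : Fin k → ℝ) (hx : x ∈ stdSimplex ℝ (Fin k)) :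
    ∑ i, x i * Real.log (x i) ≤ 0 := by
  apply Finset.sum_nonpos
  intro i _
  exact Real.mul_log_nonpos (hx.1 i) (by
    calc x i ≤ ∑ j, x j := Finset.single_le_sum (fun j _ => hx.1 j) (Finset.mem_univ i)
    _ = 1 := hx.2)

lemma entropy_lb {k : ℕ} [NeZero k] (x : Fin k → ℝ) (hx : x ∈ stdSimplex ℝ (Fin k)) :
    -Real.log k ≤ ∑ i, x i * Real.log (x i) := by
  have hk : (0:ℝ) < k := Nat.cast_pos.mpr (Nat.pos_of_ne_zero (NeZero.ne k))
  have hJ := convexOn_mul_log.map_sum_le (t := Finset.univ)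
    (w := fun _ : Fin k => (k:ℝ)⁻¹) (p := fun i => (k:ℝ) * x i)
    (fun i _ => by positivity)
    (by simp [Finset.card_univ, NeZero.ne k])
    (fun i _ => by
      have := hx.1 i; simp [Set.mem_Ici]; positivity)
  have hsum : ∑ i, (k:ℝ)⁻¹ • ((k:ℝ) * x i) = 1 := by
    rw [← hx.2]; congr 1; ext i; rw [smul_eq_mul, ← mul_assoc, inv_mul_cancel₀ (ne_of_gt hk), one_mul]
  rw [hsum] at hJ
  simp only [one_mul, Real.log_one, mul_zero, smul_eq_mul] at hJ
  have hterm : ∀ i, (k:ℝ)⁻¹ * ((k:ℝ) * x i * Real.log ((k:ℝ) * x i))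
      = x i * Real.log k + x i * Real.log (x i) := by
    intro i
    rcases eq_or_lt_of_le (hx.1 i) with h0 | h0
    · simp [← h0]
    · rw [Real.log_mul (ne_of_gt hk) (ne_of_gt h0)]
      field_simp
  rw [Finset.sum_congr rfl (fun i _ => hterm i)] at hJ
  rw [Finset.sum_add_distrib, ← Finset.sum_mul, hx.2, one_mul] at hJ
  linarith

/-- An entropy-regularized equilibrium approximates Nash: a saddle point of
`xᵀAy + β h₁(x) − β h₂(y)` over `Δ_m × Δ_n` (with `h₁, h₂` negative entropies,
`x` minimizing and `y` maximizing) is an `ε`-Nash equilibrium of the original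
bilinear game with `ε ≤ β(log m + log n)`. -/
theorem stmt_17 {m n : ℕ} [NeZero m] [NeZero n]
    (A : Matrix (Fin m) (Fin n) ℝ) (β : ℝ) (hβ : 0 < β)
    (Φ : (Fin m → ℝ) → (Fin n → ℝ) → ℝ)
    (hΦ : ∀ x y, Φ x y = x ⬝ᵥ A.mulVec y
      + β * ∑ i, x i * Real.log (x i) - β * ∑ j, y j * Real.log (y j))
    (xb : Fin m → ℝ) (yb : Fin n → ℝ)
    (hxb : xb ∈ stdSimplex ℝ (Fin m)) (hyb : yb ∈ stdSimplex ℝ (Fin n))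
    (hsaddle1 : ∀ x ∈ stdSimplex ℝ (Fin m), Φ xb yb ≤ Φ x yb)
    (hsaddle2 : ∀ y ∈ stdSimplex ℝ (Fin n), Φ xb y ≤ Φ xb yb) :
    (∀ x ∈ stdSimplex ℝ (Fin m),
      xb ⬝ᵥ A.mulVec yb ≤ x ⬝ᵥ A.mulVec yb + β * (Real.log m + Real.log n)) ∧
    (∀ y ∈ stdSimplex ℝ (Fin n),
      xb ⬝ᵥ A.mulVec y ≤ xb ⬝ᵥ A.mulVec yb + β * (Real.log m + Real.log n)) := by
  have hlogm : 0 ≤ Real.log m := Real.log_nonneg (by exact_mod_cast Nat.one_le_iff_ne_zero.mpr (NeZero.ne m))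
  have hlogn : 0 ≤ Real.log n := Real.log_nonneg (by exact_mod_cast Nat.one_le_iff_ne_zero.mpr (NeZero.ne n))
  have hxbub := entropy_nonpos xb hxb
  have hxblb := entropy_lb xb hxb
  have hybub := entropy_nonpos yb hyb
  have hyblb := entropy_lb yb hyb
  constructor
  · intro x hx
    have h1 := hsaddle1 x hx
    rw [hΦ, hΦ] at h1
    have hxub := entropy_nonpos x hx
    nlinarith [mul_nonneg hβ.le hlogn, mul_le_mul_of_nonneg_left hxblb hβ.le,
      mul_le_mul_of_nonneg_left hxub hβ.le]
  · intro y hy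
    have h2 := hsaddle2 y hy
    rw [hΦ, hΦ] at h2
    have hyub := entropy_nonpos y hy
    nlinarith [mul_nonneg hβ.le hlogm, mul_le_mul_of_nonneg_left hyblb hβ.le,
      mul_le_mul_of_nonneg_left hyub hβ.le]
end
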